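/- For every ε > 0 there exists k₀ ∈ ℕ such that for every k ≥ k₀ and every monotone function G : ℝ → ℝ with 0 ≤ G(x) ≤ 1 for all x, G(x) = 0 for all x < 0, and sup_{x∈ℝ} |G(x) − F(x)| ≤ χ_k, the lower-band survival integral L = ∫_{(0,∞)} (1 − min(G(x)+χ_k, 1)) dx satisfies M − ε ≤ L ≤ M. -/

import Mathlib

open MeasureTheory

/-- Deterministic core of the limit-PAC theorem for DKW-E-Lower: for every `ε > 0`
there is `k₀ ≥ 1` such that for every `k ≥ k₀` and every empirical cdf `G` uniformly
`χ_k`-close to the true cdf `F`, the lower-band survival integral `L` satisfies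
`M − ε ≤ L ≤ M`. -/
theorem dkw_e_lower_limit_pac
    (μ : Measure ℝ) [IsProbabilityMeasure μ] (hμ : μ (Set.Iio 0) = 0)
    (F : ℝ → ℝ) (hF : ∀ x, F x = (μ (Set.Iic x)).toReal)
    (hint : Integrable (fun x : ℝ => x) μ)
    (M : ℝ) (hM : M = ∫ x, x ∂μ)
    (δ : ℝ) (hδ0 : 0 < δ) (hδ1 : δ < 1)
    (χ : ℕ → ℝ) (hχ : ∀ k : ℕ, 1 ≤ k → χ k = Real.sqrt (Real.log (2 / δ) / (2 * k)))
    (ε : ℝ) (hε : 0 < ε) :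
    ∃ k₀ : ℕ, 1 ≤ k₀ ∧ ∀ k : ℕ, k₀ ≤ k →
      ∀ G : ℝ → ℝ, Monotone G → (∀ x, 0 ≤ G x) → (∀ x, G x ≤ 1) →
        (∀ x : ℝ, x < 0 → G x = 0) →
        (∀ x : ℝ, |G x - F x| ≤ χ k) →
        M - ε ≤ (∫ x in Set.Ioi (0 : ℝ), (1 - min (G x + χ k) 1))
          ∧ (∫ x in Set.Ioi (0 : ℝ), (1 - min (G x + χ k) 1)) ≤ M := by
  classical
  set S : ℝ → ℝ := fun t => (μ (Set.Ioi t)).toReal with hS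
  -- basic nonnegativity a.e.
  have f_nn : 0 ≤ᵐ[μ] (fun x : ℝ => x) := by
    rw [Filter.EventuallyLE, ae_iff]
    have : {x : ℝ | ¬ (0 : ℝ) ≤ x} = Set.Iio 0 := by
      ext x; simp [Set.mem_Iio, not_le]
    simpa [this, Set.Iio] using hμ
  -- survival identity
  have hMS : M = ∫ t in Set.Ioi (0:ℝ), S t := by
    rw [hM, hint.integral_eq_integral_meas_lt f_nn]
    rfl
  -- F t = 1 - S t
  have hFS : ∀ t, S t = 1 - F t := by
    intro t
    have hc : μ (Set.Ioi t) = 1 - μ (Set.Iic t) := by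
      rw [← Set.compl_Iic, measure_compl measurableSet_Iic (measure_ne_top μ _),
        measure_univ]
    show (μ (Set.Ioi t)).toReal = 1 - F t
    rw [hF, hc, ENNReal.toReal_sub_of_le prob_le_one ENNReal.one_ne_top,
      ENNReal.toReal_one]
  have hF_le_one : ∀ t, F t ≤ 1 := by
    intro t
    rw [hF]
    exact ENNReal.toReal_le_of_le_ofReal one_pos.le (by simpa using prob_le_one)
  have hS_nn : ∀ t, 0 ≤ S t := fun t => ENNReal.toReal_nonneg
  -- measurability of S
  have hS_anti : Antitone S := by
    intro a b hab
    exact ENNReal.toReal_mono (measure_ne_top μ _) (measure_mono (Set.Ioi_subset_Ioi hab))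
  have hS_meas : Measurable S := hS_anti.measurable
  -- integrability of S on Ioi 0
  have hlin : ∫⁻ t in Set.Ioi (0:ℝ), μ (Set.Ioi t) < ⊤ := by
    have key := lintegral_eq_lintegral_meas_lt μ f_nn hint.aemeasurable
    have : ∫⁻ x, ENNReal.ofReal x ∂μ < ⊤ := hint.lintegral_lt_top
    rw [key] at this
    simpa [Set.Ioi] using this
  have hS_int : IntegrableOn S (Set.Ioi (0:ℝ)) := by
    refine ⟨hS_meas.aestronglyMeasurable, ?_⟩
    rw [hasFiniteIntegral_iff_norm]
    refine lt_of_le_of_lt (lintegral_mono fun t => ?_) hlin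
    rw [Real.norm_eq_abs, abs_of_nonneg (hS_nn t)]
    exact ENNReal.ofReal_toReal_le
  -- truncation
  have hUnion : (⋃ n : ℕ, Set.Ioc (0:ℝ) n) = Set.Ioi 0 := by
    ext x
    simp only [Set.mem_iUnion, Set.mem_Ioc, Set.mem_Ioi]
    constructor
    · rintro ⟨n, h, _⟩; exact h
    · intro hx
      obtain ⟨n, hn⟩ := exists_nat_ge x
      exact ⟨n, hx, hn⟩
  have htend : Filter.Tendsto (fun n : ℕ => ∫ t in Set.Ioc (0:ℝ) n, S t)
      Filter.atTop (nhds M) := by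
    have := tendsto_setIntegral_of_monotone (f := S) (μ := volume)
      (fun n : ℕ => measurableSet_Ioc)
      (fun a b hab => Set.Ioc_subset_Ioc_right (Nat.cast_le.mpr hab))
      (by rw [hUnion]; exact hS_int)
    rwa [hUnion, ← hMS] at this
  obtain ⟨n, hn⟩ := (htend.eventually (eventually_ge_nhds
    (show M - ε/2 < M by linarith))).exists
  set T : ℝ := (n : ℝ) with hT
  have hT0 : 0 ≤ T := Nat.cast_nonneg n
  -- choose k₀
  set c : ℝ := Real.log (2 / δ) with hcdef
  have hc0 : 0 < c := Real.log_pos (by rw [lt_div_iff₀ hδ0]; linarith)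
  set η : ℝ := ε / (4 * (T + 1)) with hη
  have hη0 : 0 < η := div_pos hε (by linarith)
  obtain ⟨k₁, hk₁⟩ := exists_nat_ge (c / (2 * η ^ 2))
  refine ⟨max 1 k₁, le_max_left _ _, ?_⟩
  intro k hk G hGmono hG0 hG1 hGneg hGF
  have hk1 : 1 ≤ k := le_trans (le_max_left _ _) hk
  have hkk₁ : (k₁ : ℝ) ≤ k := by exact_mod_cast le_trans (le_max_right _ _) hk
  have hkpos : (0:ℝ) < k := by exact_mod_cast hk1
  -- bound on χ k
  have hχk_eq : χ k = Real.sqrt (c / (2 * k)) := hχ k hk1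
  have hχk_nn : 0 ≤ χ k := by rw [hχk_eq]; exact Real.sqrt_nonneg _
  have hχk_le : χ k ≤ η := by
    rw [hχk_eq]
    have h1 : c / (2 * k) ≤ η ^ 2 := by
      rw [div_le_iff₀ (by positivity)]
      have := hk₁.trans hkk₁
      rw [div_le_iff₀ (by positivity)] at this
      nlinarith
    calc Real.sqrt (c / (2 * k)) ≤ Real.sqrt (η ^ 2) := Real.sqrt_le_sqrt h1
      _ = η := Real.sqrt_sq hη0.le
  set χk := χ k
  set h : ℝ → ℝ := fun x => 1 - min (G x + χk) 1 with hh
  have hh_nn : ∀ x, 0 ≤ h x := fun x => by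
    simp only [hh]; have := min_le_right (G x + χk) 1; linarith
  have hh_le_S : ∀ x, h x ≤ S x := by
    intro x
    have h1 : F x ≤ G x + χk := by
      have := abs_le.mp (hGF x); linarith [this.1]
    have : F x ≤ min (G x + χk) 1 := le_min h1 (hF_le_one x)
    rw [hFS x]; simp only [hh]; linarith
  have hh_ge : ∀ x, S x - 2 * χk ≤ h x := by
    intro x
    have h1 : min (G x + χk) 1 ≤ G x + χk := min_le_left _ _
    have h2 : G x ≤ F x + χk := by
      have := abs_le.mp (hGF x); linarith [this.2]
    rw [hFS x]; simp only [hh]; linarith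
  have hh_meas : Measurable h := by
    apply measurable_const.sub
    exact ((hGmono.measurable.add_const χk).min measurable_const)
  have hh_int : IntegrableOn h (Set.Ioi (0:ℝ)) := by
    refine MeasureTheory.Integrable.mono hS_int hh_meas.aestronglyMeasurable ?_
    refine Filter.Eventually.of_forall fun x => ?_
    rw [Real.norm_eq_abs, Real.norm_eq_abs, abs_of_nonneg (hh_nn x),
      abs_of_nonneg (hS_nn x)]
    exact hh_le_S x
  constructor
  · -- lower bound
    have step1 : ∫ x in Set.Ioc (0:ℝ) T, h x ≤ ∫ x in Set.Ioi (0:ℝ), h x := by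
      apply setIntegral_mono_set hh_int
        (Filter.Eventually.of_forall fun x => hh_nn x)
        (Filter.Eventually.of_forall Set.Ioc_subset_Ioi_self)
    have hS_intT : IntegrableOn S (Set.Ioc (0:ℝ) T) :=
      hS_int.mono_set Set.Ioc_subset_Ioi_self
    have hh_intT : IntegrableOn h (Set.Ioc (0:ℝ) T) :=
      hh_int.mono_set Set.Ioc_subset_Ioi_self
    have step2 : ∫ x in Set.Ioc (0:ℝ) T, (S x - 2 * χk) ≤ ∫ x in Set.Ioc (0:ℝ) T, h x := by
      apply integral_mono (hS_intT.sub (integrableOn_const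
        measure_Ioc_lt_top.ne)) hh_intT
      intro x; exact hh_ge x
    have step3 : ∫ x in Set.Ioc (0:ℝ) T, (S x - 2 * χk)
        = (∫ x in Set.Ioc (0:ℝ) T, S x) - 2 * χk * T := by
      rw [integral_sub hS_intT (integrableOn_const measure_Ioc_lt_top.ne),
        setIntegral_const, measureReal_def, Real.volume_Ioc, smul_eq_mul]
      rw [ENNReal.toReal_ofReal (by linarith)]
      ring
    have hχT : 2 * χk * T ≤ ε / 2 := by
      have h1 : 2 * χk * T ≤ 2 * η * T := by nlinarith
      have hkey : η * (4 * (T + 1)) = ε := div_mul_cancel₀ ε (by linarith)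
      nlinarith [hη0.le, hT0]
    calc M - ε ≤ (M - ε/2) - ε/2 := by linarith
      _ ≤ (∫ x in Set.Ioc (0:ℝ) T, S x) - 2 * χk * T := by
          refine sub_le_sub ?_ hχT
          exact hn
      _ = ∫ x in Set.Ioc (0:ℝ) T, (S x - 2 * χk) := step3.symm
      _ ≤ ∫ x in Set.Ioc (0:ℝ) T, h x := step2
      _ ≤ _ := step1
  · -- upper bound
    rw [hMS]
    exact integral_mono hh_int hS_int fun x => hh_le_S x
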